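/- Let T : E → E* be a linear (everywhere defined, not necessarily continuous) monotone map on a real Banach space E, i.e., ⟨x, Tx⟩ ≥ 0 for all x ∈ E. Then T is maximally monotone: if (y,y*) ∈ E × E* satisfies ⟨x − y, Tx − y*⟩ ≥ 0 for all x ∈ E, then y* = Ty. -/

import Mathlib

theorem stmt18 {E : Type*} [NormedAddCommGroup E] [NormedSpace ℝ E] [CompleteSpace E]
    [Nontrivial E]
    (T : E →ₗ[ℝ] StrongDual ℝ E)
    (hmono : ∀ x : E, 0 ≤ T x x)
    (y : E) (y' : StrongDual ℝ E)
    (h : ∀ x : E, 0 ≤ (T x - y') (x - y)) :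
    y' = T y := by
  have key : ∀ z : E, 0 ≤ (T y) z - y' z := by
    intro z
    have hz : ∀ t : ℝ, 0 < t → 0 ≤ (T y z - y' z) + t * (T z z) := by
      intro t ht
      have := h (y + t • z)
      have e : (T (y + t • z) - y') ((y + t • z) - y)
          = t * ((T y z - y' z) + t * (T z z)) := by
        simp [map_add, map_smul]
        exact Or.inl (add_sub_right_comm _ _ _)
      rw [e] at this
      nlinarith
    by_contra hc
    push_neg at hc
    set c := T y z - y' z with hcdef
    set a := T z z with hadef
    have ha : 0 ≤ a := hmono z
    have ht : 0 < -c / (a + 1) := div_pos (neg_pos.mpr hc) (by linarith)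
    have := hz _ ht
    have h1 : c + (-c / (a + 1)) * a = c * (1 / (a + 1)) := by
      field_simp
      ring
    nlinarith [mul_pos (neg_pos.mpr hc) (by positivity : (0:ℝ) < 1 / (a+1))]
  ext z
  have h1 := key z
  have h2 := key (-z)
  simp only [map_neg] at h2
  linarith
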